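/- Let G be a compact group and M a closed abelian subgroup such that some nonempty open subset V ⊆ M satisfies: x^k has at most s conjugates in G for all x ∈ V (for fixed positive integers k, s). Then there exist positive integers l and m such that every element of M^l has at most ms conjugates in G. -/

import Mathlib

/-- If `M` is a closed abelian subgroup of a compact group `G` and some nonempty open
subset `V` of `M` satisfies that `x^k` has at most `s` conjugates in `G` for all `x ∈ V`,
then there are positive integers `l, m` such that every element of `M^l` (the subgroup
generated by `l`-th powers of elements of `M`) has at most `m·s` conjugates in `G`. -/
theorem stmt12 {G : Type*} [Group G] [TopologicalSpace G] [IsTopologicalGroup G]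
    [CompactSpace G] [T2Space G]
    (M : Subgroup G) (hM : IsClosed (M : Set G))
    (habel : ∀ x ∈ M, ∀ y ∈ M, Commute x y)
    (k s : ℕ) (hk : 0 < k) (hs : 0 < s)
    (V : Set ↥M) (hV : IsOpen V) (hVne : V.Nonempty)
    (hVconj : ∀ x ∈ V, 0 < (Subgroup.centralizer {(x : G) ^ k}).index ∧
      (Subgroup.centralizer {(x : G) ^ k}).index ≤ s) :
    ∃ l m : ℕ, 0 < l ∧ 0 < m ∧
      ∀ y ∈ Subgroup.closure ((fun g : G => g ^ l) '' (M : Set G)),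
        0 < (Subgroup.centralizer {y}).index ∧
          (Subgroup.centralizer {y}).index ≤ m * s := by
  classical
  obtain ⟨v₀, hv₀⟩ := hVne
  letI : CommGroup ↥M :=
    { (inferInstance : Group ↥M) with
      mul_comm := fun a b => Subtype.ext (habel _ a.2 _ b.2) }
  -- The predicate "g has at most c conjugates"
  set P : G → ℕ → Prop := fun g c =>
    (Subgroup.centralizer {g}).index ≠ 0 ∧ (Subgroup.centralizer {g}).index ≤ c with hPdef
  have Ple : ∀ {g h : G} {c : ℕ},
      Subgroup.centralizer {g} ≤ Subgroup.centralizer {h} → P g c → P h c := by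
    intro g h c hle hg
    have hdvd := Subgroup.index_dvd_of_le hle
    have hne : (Subgroup.centralizer {h}).index ≠ 0 := by
      intro h0
      exact hg.1 (by simpa [h0] using hdvd)
    exact ⟨hne, le_trans (Nat.le_of_dvd (Nat.pos_of_ne_zero hg.1) hdvd) hg.2⟩
  have Pmul : ∀ {g h : G} {c d : ℕ}, P g c → P h d → P (g * h) (c * d) := by
    intro g h c d hg hh
    have hle : Subgroup.centralizer {g} ⊓ Subgroup.centralizer {h} ≤
        Subgroup.centralizer {g * h} := by
      intro x hx
      rw [Subgroup.mem_centralizer_iff]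
      rintro z rfl
      have h1 := Subgroup.mem_centralizer_iff.mp hx.1 g rfl
      have h2 := Subgroup.mem_centralizer_iff.mp hx.2 h rfl
      calc g * h * x = g * (x * h) := by rw [mul_assoc, h2]
        _ = x * (g * h) := by rw [← mul_assoc, h1, mul_assoc]
    have hdvd := Subgroup.index_dvd_of_le hle
    have hinf_ne := Subgroup.index_inf_ne_zero hg.1 hh.1
    have hne : (Subgroup.centralizer {g * h}).index ≠ 0 := by
      intro h0
      exact hinf_ne (by simpa [h0] using hdvd)
    refine ⟨hne, ?_⟩
    calc (Subgroup.centralizer {g * h}).index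
        ≤ (Subgroup.centralizer {g} ⊓ Subgroup.centralizer {h}).index :=
          Nat.le_of_dvd (Nat.pos_of_ne_zero hinf_ne) hdvd
      _ ≤ (Subgroup.centralizer {g}).index * (Subgroup.centralizer {h}).index :=
          Subgroup.index_inf_le
      _ ≤ c * d := Nat.mul_le_mul hg.2 hh.2
  have Ppow : ∀ {g : G} {c : ℕ} (n : ℕ), P g c → P (g ^ n) c := by
    intro g c n hg
    refine Ple ?_ hg
    intro x hx
    rw [Subgroup.mem_centralizer_iff]
    rintro z rfl
    have h1 := Subgroup.mem_centralizer_iff.mp hx g rfl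
    exact ((show Commute g x from h1).pow_left n)
  have Pinv : ∀ {g : G} {c : ℕ}, P g c → P g⁻¹ c := by
    intro g c hg
    refine Ple ?_ hg
    intro x hx
    rw [Subgroup.mem_centralizer_iff]
    rintro z rfl
    have h1 := Subgroup.mem_centralizer_iff.mp hx g rfl
    exact ((show Commute g x from h1).inv_left)
  -- M is a compact space
  haveI : CompactSpace ↥M := isCompact_iff_compactSpace.mp hM.isCompact
  -- finite cover of M by translates of V
  obtain ⟨t, ht⟩ := isCompact_univ.elim_finite_subcover
    (fun c : ↥M => (fun y => c * y) '' V)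
    (fun c => (Homeomorph.mulLeft c).isOpenMap V hV)
    (fun x _ => Set.mem_iUnion.mpr ⟨x * v₀⁻¹, ⟨v₀, hv₀, inv_mul_cancel_right x v₀⟩⟩)
  have hcover : ∀ y : ↥M, ∃ c ∈ t, ∃ v ∈ V, y = c * v := by
    intro y
    have := ht (Set.mem_univ y)
    simp only [Set.mem_iUnion, Set.mem_image] at this
    obtain ⟨c, hct, v, hvV, hcv⟩ := this
    exact ⟨c, hct, v, hvV, hcv.symm⟩
  -- key step: every element of M has a positive power in V⁻¹ * V (abelian form)
  have keyA : ∀ x : ↥M, ∃ n : ℕ, 0 < n ∧ ∃ a ∈ V, ∃ b ∈ V, x ^ n = b * a⁻¹ := by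
    intro x
    have hmem : ∀ n : Fin (t.card + 1), ∃ c ∈ t, ∃ v ∈ V, x ^ (n : ℕ) = c * v :=
      fun n => hcover (x ^ (n : ℕ))
    choose c hct v hvV hx using hmem
    obtain ⟨i, -, j, -, hij, hcij⟩ :=
      Finset.exists_ne_map_eq_of_card_lt_of_maps_to
        (s := (Finset.univ : Finset (Fin (t.card + 1)))) (t := t)
        (by simp) (fun i _ => hct i)
    have main : ∀ i j : Fin (t.card + 1), (i : ℕ) < (j : ℕ) → c i = c j →
        ∃ n : ℕ, 0 < n ∧ ∃ a ∈ V, ∃ b ∈ V, x ^ n = b * a⁻¹ := by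
      intro i j hlt hceq
      refine ⟨(j : ℕ) - (i : ℕ), Nat.sub_pos_of_lt hlt, v i, hvV i, v j, hvV j, ?_⟩
      have hpow : x ^ ((j : ℕ) - (i : ℕ)) * x ^ (i : ℕ) = x ^ (j : ℕ) := by
        rw [← pow_add, Nat.sub_add_cancel hlt.le]
      have : x ^ ((j : ℕ) - (i : ℕ)) = x ^ (j : ℕ) * (x ^ (i : ℕ))⁻¹ := by
        rw [← hpow, mul_inv_cancel_right]
      rw [this, hx j, hx i, hceq]
      rw [mul_inv_rev, mul_comm (c j) (v j), mul_assoc]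
      congr 1
      rw [← mul_assoc]
      exact mul_inv_cancel_comm (c j) (v i)⁻¹
    rcases hij.lt_or_gt with h | h
    · exact main i j h hcij
    · exact main j i h hcij.symm
  -- key step: every element x of M has a positive n with P ((x:G)^(n*k)) (s*s)
  have keyB : ∀ x : ↥M, ∃ n : ℕ, 0 < n ∧ P ((x : G) ^ (n * k)) (s * s) := by
    intro x
    obtain ⟨n, hn, a, haV, b, hbV, hxn⟩ := keyA x
    refine ⟨n, hn, ?_⟩
    have h1 : ((x : G)) ^ n = (b : G) * ((a : G))⁻¹ := by
      have := congrArg (fun z : ↥M => (z : G)) hxn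
      simpa using this
    have hcomm : Commute ((b : G)) (((a : G))⁻¹) :=
      habel _ b.2 _ (M.inv_mem a.2)
    have hcoe : ((x : G)) ^ (n * k) = ((b : G)) ^ k * (((a : G)) ^ k)⁻¹ := by
      rw [pow_mul, h1, hcomm.mul_pow, inv_pow]
    rw [hcoe]
    have Pa : P (((a : G)) ^ k) s := ⟨(hVconj a haV).1.ne', (hVconj a haV).2⟩
    have Pb : P (((b : G)) ^ k) s := ⟨(hVconj b hbV).1.ne', (hVconj b hbV).2⟩
    exact Pmul Pb (Pinv Pa)
  choose nf hnfpos hnfP using keyB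
  -- define l and m
  refine ⟨k * ∏ c ∈ t, nf c, s * s, ?_, Nat.mul_pos hs hs, ?_⟩
  · exact Nat.mul_pos hk (Finset.prod_pos fun c _ => hnfpos c)
  set l : ℕ := k * ∏ c ∈ t, nf c with hl
  -- every l-th power of an element of M satisfies P _ (s*s*s)
  have hmain : ∀ y : ↥M, P ((y : G) ^ l) (s * s * s) := by
    intro y
    obtain ⟨c, hct, v, hvV, hyv⟩ := hcover y
    have hyG : (y : G) = (c : G) * (v : G) := by
      have := congrArg (fun z : ↥M => (z : G)) hyv
      simpa using this
    have hcomm : Commute ((c : G)) ((v : G)) := habel _ c.2 _ v.2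
    have hsplit : ((y : G)) ^ l = ((c : G)) ^ l * ((v : G)) ^ l := by
      rw [hyG, hcomm.mul_pow]
    rw [hsplit]
    have hcl : ((c : G)) ^ l = (((c : G)) ^ (nf c * k)) ^ (∏ c' ∈ t.erase c, nf c') := by
      rw [← pow_mul]
      congr 1
      rw [hl, ← Finset.mul_prod_erase t nf hct]
      ring
    have Pc : P (((c : G)) ^ l) (s * s) := by
      rw [hcl]; exact Ppow _ (hnfP c)
    have hvl : ((v : G)) ^ l = (((v : G)) ^ k) ^ (∏ c' ∈ t, nf c') := by
      rw [← pow_mul, hl]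
    have Pv : P (((v : G)) ^ l) s := by
      rw [hvl]
      exact Ppow _ ⟨(hVconj v hvV).1.ne', (hVconj v hvV).2⟩
    exact Pmul Pc Pv
  -- the set of l-th powers of elements of M is a subgroup
  let N : Subgroup G :=
    { carrier := (fun g : G => g ^ l) '' (M : Set G)
      one_mem' := ⟨1, M.one_mem, one_pow l⟩
      mul_mem' := by
        rintro _ _ ⟨a, ha, rfl⟩ ⟨b, hb, rfl⟩
        exact ⟨a * b, M.mul_mem ha hb, by dsimp; exact (habel a ha b hb).mul_pow l⟩
      inv_mem' := by
        rintro _ ⟨a, ha, rfl⟩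
        exact ⟨a⁻¹, M.inv_mem ha, by dsimp; exact inv_pow a l⟩ }
  intro y hy
  have hyN : y ∈ N := (Subgroup.closure_le N).mpr (fun z hz => hz) hy
  obtain ⟨z, hzM, rfl⟩ := hyN
  have := hmain ⟨z, hzM⟩
  exact ⟨Nat.pos_of_ne_zero this.1, by simpa [mul_assoc] using this.2⟩
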